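/- Let v > 0, ρ ∈ (0,1), R̄ ∈ ℝ, λ > 0 and j ∈ (0,1). For each integer n ≥ 1 set κ₁(n) = v²(1+(n−1)ρ) and ϖ_n* = (2κ₁(n)/j + nR̄ − √((2κ₁(n)/j − nR̄)² + 8nκ₁(n)λ))/(4κ₁(n)), and set κ = v²ρ and ϖ_∞* = (2κ/j + R̄ − √((2κ/j − R̄)² + 8κλ))/(4κ). Then ϖ_n* → ϖ_∞* as n → ∞. -/

import Mathlib

open Filter

theorem stmt_15 (v ρ Rbar lam j : ℝ) (hv : 0 < v) (hρ₀ : 0 < ρ) (hρ₁ : ρ < 1)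
    (hlam : 0 < lam) (hj₀ : 0 < j) (hj₁ : j < 1)
    (κ₁ : ℕ → ℝ) (hκ₁ : κ₁ = fun n : ℕ => v ^ 2 * (1 + ((n : ℝ) - 1) * ρ))
    (ϖn : ℕ → ℝ)
    (hϖn : ϖn = fun n => (2 * κ₁ n / j + (n : ℝ) * Rbar
      - Real.sqrt ((2 * κ₁ n / j - (n : ℝ) * Rbar) ^ 2 + 8 * (n : ℝ) * κ₁ n * lam))
        / (4 * κ₁ n))
    (κ : ℝ) (hκ : κ = v ^ 2 * ρ)
    (ϖinf : ℝ)
    (hϖinf : ϖinf = (2 * κ / j + Rbar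
      - Real.sqrt ((2 * κ / j - Rbar) ^ 2 + 8 * κ * lam)) / (4 * κ)) :
    Tendsto ϖn atTop (nhds ϖinf) := by
  have hκpos : 0 < κ := by rw [hκ]; positivity
  set g : ℝ → ℝ := fun x =>
    (2 * x / j + Rbar - Real.sqrt ((2 * x / j - Rbar) ^ 2 + 8 * x * lam)) / (4 * x) with hg
  -- κ₁ n / n → κ
  have hlim : Tendsto (fun n : ℕ => κ₁ n / n) atTop (nhds κ) := by
    have h1 : Tendsto (fun n : ℕ => (1 : ℝ) / n) atTop (nhds 0) := by
      simpa using (tendsto_one_div_atTop_nhds_zero_nat : Tendsto (fun n : ℕ => (1 : ℝ) / n) atTop (nhds 0))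
    have h2 : Tendsto (fun n : ℕ => v ^ 2 * (1 / n + (1 - 1 / n) * ρ)) atTop
        (nhds (v ^ 2 * (0 + (1 - 0) * ρ))) := by
      apply Tendsto.const_mul
      exact (h1.add (((tendsto_const_nhds.sub h1).mul_const ρ)))
    have heq : ∀ᶠ n : ℕ in atTop, v ^ 2 * (1 / n + (1 - 1 / n) * ρ) = κ₁ n / n := by
      filter_upwards [eventually_ge_atTop 1] with n hn
      have hn' : (0 : ℝ) < n := by exact_mod_cast hn
      rw [hκ₁]
      field_simp
    have := h2.congr' heq
    simpa [hκ] using this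
  -- g continuous at κ
  have hgcont : ContinuousAt g κ := by
    apply ContinuousAt.div
    · exact ((continuousAt_id.const_mul 2 |>.div_const j).add continuousAt_const).sub
        (Real.continuous_sqrt.continuousAt.comp (by fun_prop))
    · fun_prop
    · positivity
  have hcomp : Tendsto (fun n : ℕ => g (κ₁ n / n)) atTop (nhds (g κ)) :=
    hgcont.tendsto.comp hlim
  have hfinal : ϖn =ᶠ[atTop] fun n : ℕ => g (κ₁ n / n) := by
    filter_upwards [eventually_ge_atTop 1] with n hn
    have hn' : (0 : ℝ) < n := by exact_mod_cast hn
    rw [hϖn, hg]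
    simp only
    have hc : 0 < κ₁ n := by
      have h1 : (1:ℝ) ≤ (n:ℝ) := by exact_mod_cast hn
      have : κ₁ n = v ^ 2 * (1 + ((n:ℝ) - 1) * ρ) := by rw [hκ₁]
      rw [this]
      nlinarith
    have hsq : (2 * κ₁ n / j - (n : ℝ) * Rbar) ^ 2 + 8 * (n : ℝ) * κ₁ n * lam
        = (n : ℝ) ^ 2 * ((2 * (κ₁ n / n) / j - Rbar) ^ 2 + 8 * (κ₁ n / n) * lam) := by
      field_simp
    rw [hsq, Real.sqrt_mul (sq_nonneg _), Real.sqrt_sq hn'.le]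
    generalize Real.sqrt ((2 * (κ₁ n / ↑n) / j - Rbar) ^ 2 + 8 * (κ₁ n / ↑n) * lam) = s
    rw [div_eq_div_iff (by positivity) (by positivity)]
    field_simp
  have : g κ = ϖinf := by rw [hϖinf, hg]
  rw [← this]
  exact hcomp.congr' hfinal.symm
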